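/- Assume λ(μ) ≠ 0 for every μ ∈ ℕ₀Δ̂⁺ ∖ {0} satisfying ½(μ,μ) = (ρ,μ). Then the set P := {0} ∪ {ħ ∈ ℂ ∖ {0} : p_{iλ/ħ}(μ) = 0 for some μ ∈ ℕ₀Δ̂⁺ ∖ {0}} is countable, and every accumulation point of P in ℂ equals 0. -/

import Mathlib

set_option maxHeartbeats 1000000 in
/-- Let `E` be a finite-dimensional real inner product space,
`Δ̂⁺ ⊆ E ∖ {0}` a finite set contained in an open half-space, `ρ ∈ E` and
`λ : E → ℂ` an `ℝ`-linear map.  Set `p_{iλ/hbar}(μ) = ½(μ,μ) − (ρ,μ) − (i/hbar)·λ(μ)`.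
If `λ(μ) ≠ 0` for every `μ ∈ ℕ₀Δ̂⁺ ∖ {0}` with `½(μ,μ) = (ρ,μ)`, then
`P = {0} ∪ {hbar ≠ 0 : p_{iλ/hbar}(μ) = 0 for some μ ∈ ℕ₀Δ̂⁺ ∖ {0}}` is countable and
its only possible accumulation point in `ℂ` is `0`. -/
theorem stmt5 {E : Type} [NormedAddCommGroup E] [InnerProductSpace ℝ E]
    [FiniteDimensional ℝ E]
    (Δhat : Finset E) (hΔ0 : (0 : E) ∉ Δhat)
    (hhalf : ∃ ξ : E, ∀ β ∈ Δhat, 0 < (inner ℝ ξ β : ℝ))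
    (ρ : E) (lam : E →ₗ[ℝ] ℂ)
    (p : ℂ → E → ℂ)
    (hp : ∀ hbar μ, p hbar μ = (1/2 : ℂ) * ((inner ℝ μ μ : ℝ) : ℂ) - ((inner ℝ ρ μ : ℝ) : ℂ)
        - (Complex.I / hbar) * lam μ)
    (NΔ : Set E)
    (hNΔ : NΔ = {μ | ∃ c : E → ℕ, μ = ∑ β ∈ Δhat, (c β : ℝ) • β})
    (hlam : ∀ μ ∈ NΔ, μ ≠ 0 → (1/2 : ℝ) * (inner ℝ μ μ : ℝ) = (inner ℝ ρ μ : ℝ) → lam μ ≠ 0)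
    (P : Set ℂ)
    (hP : P = {0} ∪ {hbar | hbar ≠ 0 ∧ ∃ μ ∈ NΔ, μ ≠ 0 ∧ p hbar μ = 0}) :
    P.Countable ∧ ∀ z : ℂ, AccPt z (Filter.principal P) → z = 0 := by
  classical
  obtain ⟨ξ, hξ⟩ := hhalf
  set L := LinearMap.toContinuousLinearMap lam with hLdef
  set C := ‖L‖ with hCdef
  have hC0 : 0 ≤ C := norm_nonneg L
  have hC : ∀ x : E, ‖lam x‖ ≤ C * ‖x‖ := fun x => L.le_opNorm x
  set qr : E → ℝ := fun μ => 1/2 * (inner ℝ μ μ : ℝ) - (inner ℝ ρ μ : ℝ) with hqr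
  set f : E → ℂ := fun μ => Complex.I * lam μ / ((qr μ : ℝ) : ℂ) with hf
  -- characterization of nonzero elements of P
  have key : ∀ w ∈ P, w ≠ 0 → ∃ μ ∈ NΔ, μ ≠ 0 ∧ qr μ ≠ 0 ∧ w = f μ := by
    intro w hw hw0
    rw [hP] at hw
    rcases hw with hw | ⟨-, μ, hμN, hμ0, hpw⟩
    · exact absurd hw hw0
    rw [hp] at hpw
    have hcast : ((qr μ : ℝ) : ℂ) = (Complex.I / w) * lam μ := by
      have : (1/2 : ℂ) * ((inner ℝ μ μ : ℝ) : ℂ) - ((inner ℝ ρ μ : ℝ) : ℂ)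
          = (Complex.I / w) * lam μ := by linear_combination hpw
      rw [hqr]; push_cast; linear_combination this
    have hq0 : qr μ ≠ 0 := by
      intro h0
      have hl : lam μ ≠ 0 := by
        apply hlam μ hμN hμ0
        have := h0
        simp only [hqr] at this
        linarith
      have : (Complex.I / w) * lam μ = 0 := by rw [← hcast, h0]; simp
      rcases mul_eq_zero.1 this with h | h
      · exact hw0 (by simpa [div_eq_zero_iff, Complex.I_ne_zero] using h)
      · exact hl h
    refine ⟨μ, hμN, hμ0, hq0, ?_⟩
    have hqC : ((qr μ : ℝ) : ℂ) ≠ 0 := by exact_mod_cast Complex.ofReal_ne_zero.2 hq0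
    rw [hf]
    field_simp at hcast ⊢
    linear_combination hcast
  clear_value L C qr f
  -- the map from coefficient functions
  set F : ({x // x ∈ Δhat} → ℕ) → E := fun d => ∑ β : {x // x ∈ Δhat}, (d β : ℝ) • β.1
    with hFdef
  have hNsub : NΔ ⊆ Set.range F := by
    intro μ hμ
    rw [hNΔ] at hμ
    obtain ⟨c, hc⟩ := hμ
    exact ⟨fun β => c β.1, by rw [hFdef, hc]; exact Finset.sum_coe_sort Δhat (fun β => ((c β : ℝ) • β))⟩
  -- countability
  have hcount : P.Countable := by
    have hPsub : P ⊆ {0} ∪ f '' (Set.range F) := by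
      intro w hw
      by_cases hw0 : w = 0
      · exact Or.inl hw0
      · obtain ⟨μ, hμN, _, _, hwf⟩ := key w hw hw0
        exact Or.inr ⟨μ, hNsub hμN, hwf.symm⟩
    exact Set.Countable.mono hPsub
      ((Set.countable_singleton 0).union ((Set.countable_range F).image f))
  refine ⟨hcount, ?_⟩
  intro z hz
  by_contra hz0
  set ε := ‖z‖ / 2 with hε
  have hε0 : 0 < ε := by
    have : 0 < ‖z‖ := norm_pos_iff.2 hz0
    positivity
  -- bound: elements of NΔ giving large f-values are norm-bounded
  set R : ℝ := 2 * ‖ρ‖ + 2 * C / ε + 1 with hR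
  clear_value ε R
  have hCε : 0 ≤ 2 * C / ε := div_nonneg (by linarith) hε0.le
  have hR0 : 0 ≤ R := by rw [hR]; linarith [norm_nonneg ρ]
  have hRge : 2 * ‖ρ‖ + 1 ≤ R := by
    have h0 : 0 ≤ 2 * C / ε := by positivity
    rw [hR]; linarith
  have hbound : ∀ μ : E, ε ≤ ‖f μ‖ → ‖μ‖ ≤ R := by
    intro μ hfμ
    by_contra hgt
    push_neg at hgt
    have hgt' : 2 * ‖ρ‖ + 2 * C / ε + 1 < ‖μ‖ := by rw [hR] at hgt; exact hgt
    have hμpos : 0 < ‖μ‖ := lt_of_le_of_lt hR0 hgt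
    have hinner : (inner ℝ μ μ : ℝ) = ‖μ‖ ^ 2 := real_inner_self_eq_norm_sq μ
    have hip : (inner ℝ ρ μ : ℝ) ≤ ‖ρ‖ * ‖μ‖ := real_inner_le_norm ρ μ
    have hqlow : 1/2 * ‖μ‖ * (‖μ‖ - 2 * ‖ρ‖) ≤ qr μ := by
      rw [hqr]; simp only; rw [hinner]; nlinarith
    have hd0 : 0 < ‖μ‖ - 2 * ‖ρ‖ := by linarith
    have hqpos : 0 < qr μ := by nlinarith [hqlow, mul_pos hμpos hd0]
    have hfnorm : ‖f μ‖ = ‖lam μ‖ / qr μ := by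
      rw [hf]
      simp only [norm_div, norm_mul, Complex.norm_I, one_mul,
        Complex.norm_real, Real.norm_eq_abs, abs_of_pos hqpos]
    have hlt : ‖f μ‖ < ε := by
      rw [hfnorm, div_lt_iff₀ hqpos]
      have h1 : ‖lam μ‖ ≤ C * ‖μ‖ := hC μ
      have h2 : ε * (1/2 * ‖μ‖ * (‖μ‖ - 2 * ‖ρ‖)) ≤ ε * qr μ :=
        mul_le_mul_of_nonneg_left hqlow hε0.le
      have h3 : 2 * C < ε * (‖μ‖ - 2 * ‖ρ‖) := by
        have h5 : 2 * C / ε + 1 < ‖μ‖ - 2 * ‖ρ‖ := by linarith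
        have h4 : ε * (2 * C / ε) = 2 * C := by field_simp
        nlinarith
      have h6 := mul_lt_mul_of_pos_right h3 hμpos
      nlinarith [h1, h2, h6]
    linarith
  -- the set of μ in NΔ with bounded norm is finite
  set T : Set ({x // x ∈ Δhat} → ℕ) :=
    Set.univ.pi (fun β => Set.Iic ⌈‖ξ‖ * R / (inner ℝ ξ β.1 : ℝ)⌉₊) with hT
  have hTfin : T.Finite := Set.Finite.pi (fun β => Set.finite_Iic _)
  have hSsub : {μ | μ ∈ NΔ ∧ ‖μ‖ ≤ R} ⊆ F '' T := by
    intro μ ⟨hμN, hμR⟩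
    rw [hNΔ] at hμN
    obtain ⟨c, hc⟩ := hμN
    refine ⟨fun β => c β.1, ?_, by rw [hFdef, hc]; exact Finset.sum_coe_sort Δhat (fun β => ((c β : ℝ) • β))⟩
    intro β _
    simp only [Set.mem_Iic]
    have hβpos : 0 < (inner ℝ ξ β.1 : ℝ) := hξ β.1 β.2
    have hterm : (c β.1 : ℝ) * (inner ℝ ξ β.1 : ℝ) ≤ (inner ℝ ξ μ : ℝ) := by
      rw [hc, inner_sum]
      simp only [real_inner_smul_right]
      exact Finset.single_le_sum (f := fun b => (c b : ℝ) * (inner ℝ ξ b : ℝ))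
        (fun b hb => mul_nonneg (Nat.cast_nonneg _) (hξ b hb).le) β.2
    have hμb : (inner ℝ ξ μ : ℝ) ≤ ‖ξ‖ * R :=
      le_trans (real_inner_le_norm ξ μ)
        (mul_le_mul_of_nonneg_left hμR (norm_nonneg ξ))
    have hcb : (c β.1 : ℝ) ≤ ‖ξ‖ * R / (inner ℝ ξ β.1 : ℝ) := by
      rw [le_div_iff₀ hβpos]; linarith
    calc c β.1 = ⌈((c β.1 : ℕ) : ℝ)⌉₊ := (Nat.ceil_natCast _).symm
      _ ≤ ⌈‖ξ‖ * R / (inner ℝ ξ β.1 : ℝ)⌉₊ := Nat.ceil_le_ceil hcb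
  have hSfin : Set.Finite {μ | μ ∈ NΔ ∧ ‖μ‖ ≤ R} := (hTfin.image F).subset hSsub
  -- hence P ∩ {‖w‖ ≥ ε} is finite
  have hPfin : Set.Finite {w | w ∈ P ∧ ε ≤ ‖w‖} := by
    apply (hSfin.image f).subset
    intro w ⟨hwP, hwε⟩
    have hw0 : w ≠ 0 := by
      intro h; rw [h] at hwε; simp at hwε; linarith
    obtain ⟨μ, hμN, _, _, hwf⟩ := key w hwP hw0
    exact ⟨μ, ⟨hμN, hbound μ (hwf ▸ hwε)⟩, hwf.symm⟩
  -- derive contradiction with accumulation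
  set G := {w | w ∈ P ∧ ε ≤ ‖w‖} \ {z} with hG
  have hGfin : G.Finite := hPfin.diff
  have hGclosed : IsClosed G := hGfin.isClosed
  have hzG : z ∉ G := fun h => h.2 rfl
  have hV : Gᶜ ∈ nhds z := hGclosed.isOpen_compl.mem_nhds hzG
  have hU : Metric.ball z ε ∈ nhds z := Metric.ball_mem_nhds z hε0
  obtain ⟨y, ⟨hyUV, hyP⟩, hyz⟩ := (accPt_iff_nhds (x := z) (C := P)).1 hz _ (Filter.inter_mem hU hV)
  obtain ⟨hyU, hyV⟩ := hyUV
  have hyε : ε ≤ ‖y‖ := by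
    have hd : dist y z < ε := hyU
    have : ‖z‖ ≤ ‖y‖ + dist y z := by
      rw [dist_eq_norm]
      calc ‖z‖ = ‖y - (y - z)‖ := by ring_nf
        _ ≤ ‖y‖ + ‖y - z‖ := norm_sub_le _ _
    have hz2 : ‖z‖ = 2 * ε := by rw [hε]; ring
    linarith
  exact hyV ⟨⟨hyP, hyε⟩, hyz⟩
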